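/- Under the Haar-type hypotheses, for every diagonal matrix Λ ∈ Matrix (Fin n) (Fin n) ℝ one has P(H Λ Hᵀ e₀) = H Λ Hᵀ; equivalently, the linear map û ↦ D(û) := Hᵀ P(û) H is a bijection from Fin n → ℝ onto the space of diagonal n×n real matrices (key structural fact underlying Lemma 3.1 and Theorem 3.2). -/

import Mathlib

open Matrix

/-- Key structural fact underlying Lemma 3.1 and Theorem 3.2: under the Haar-type
hypotheses, for every diagonal matrix `Λ` one has `P (H Λ Hᵀ e₀) = H Λ Hᵀ`;
equivalently, the linear map `uh ↦ D(uh) := Hᵀ P(uh) H` is a bijection from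
`Fin n → ℝ` onto the space of diagonal `n×n` real matrices. -/
theorem haar_sg_diag_correspondence {n : ℕ} [NeZero n]
    (M : Fin n → Matrix (Fin n) (Fin n) ℝ)
    (hMsymm : ∀ k, (M k).IsSymm) (hM0 : M 0 = 1)
    (P : (Fin n → ℝ) → Matrix (Fin n) (Fin n) ℝ)
    (hP : ∀ uh, P uh = ∑ k, uh k • M k)
    (hsym : ∀ uh wh : Fin n → ℝ, (P uh).mulVec wh = (P wh).mulVec uh)
    (e0 : Fin n → ℝ) (he0 : e0 = Pi.single 0 1)
    (H : Matrix (Fin n) (Fin n) ℝ) (hH : Hᵀ * H = 1)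
    (hdiag : ∀ k, (Hᵀ * M k * H).IsDiag) :
    (∀ Λ : Matrix (Fin n) (Fin n) ℝ, Λ.IsDiag →
        P ((H * Λ * Hᵀ).mulVec e0) = H * Λ * Hᵀ) ∧
      Set.BijOn (fun uh : Fin n → ℝ => Hᵀ * P uh * H) Set.univ
        {Λ : Matrix (Fin n) (Fin n) ℝ | Λ.IsDiag} := by
  have hH' : H * Hᵀ = 1 := mul_eq_one_comm.mp hH
  -- P e0 = 1
  have hPe0 : P e0 = 1 := by
    rw [hP, he0, Finset.sum_eq_single (0 : Fin n)]
    · simp [hM0]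
    · intro k _ hk; simp [Pi.single_apply, hk]
    · simp
  have hPmul : ∀ uh : Fin n → ℝ, (P uh).mulVec e0 = uh := by
    intro uh
    rw [hsym, hPe0, Matrix.one_mulVec]
  -- conjugation recovery
  have hconj : ∀ A : Matrix (Fin n) (Fin n) ℝ, H * (Hᵀ * A * H) * Hᵀ = A := by
    intro A
    calc H * (Hᵀ * A * H) * Hᵀ = (H * Hᵀ) * A * (H * Hᵀ) := by simp only [mul_assoc]
    _ = A := by rw [hH', one_mul, mul_one]
  -- conjugate of P uh is diagonal
  have hDdiag : ∀ uh : Fin n → ℝ, (Hᵀ * P uh * H).IsDiag := by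
    intro uh
    have : Hᵀ * P uh * H = ∑ k, uh k • (Hᵀ * M k * H) := by
      rw [hP, Finset.mul_sum, Finset.sum_mul]
      congr 1; ext k
      simp [Matrix.mul_smul, Matrix.smul_mul]
    rw [this]
    refine Finset.sum_induction _ Matrix.IsDiag (fun a b ha hb => ha.add hb)
      Matrix.isDiag_zero (fun k _ => (hdiag k).smul _)
  -- diagonal matrices equal iff equal diagonals
  have hdiageq : ∀ A B : Matrix (Fin n) (Fin n) ℝ, A.IsDiag → B.IsDiag →
      A.diag = B.diag → A = B := by
    intro A B hA hB hd
    ext i j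
    by_cases hij : i = j
    · subst hij; exact congrFun hd i
    · rw [hA hij, hB hij]
  -- the linear map uh ↦ diag (Hᵀ P uh H)
  let f : (Fin n → ℝ) →ₗ[ℝ] (Fin n → ℝ) :=
    { toFun := fun uh => (Hᵀ * P uh * H).diag
      map_add' := by
        intro x y
        have : P (x + y) = P x + P y := by
          simp [hP, add_smul, Finset.sum_add_distrib]
        simp [this, Matrix.mul_add, Matrix.add_mul]
      map_smul' := by
        intro c x
        have : P (c • x) = c • P x := by
          simp [hP, smul_smul, Finset.smul_sum]
        simp [this] }
  have hfinj : Function.Injective f := by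
    rw [← LinearMap.ker_eq_bot, LinearMap.ker_eq_bot']
    intro uh huh
    have h0 : Hᵀ * P uh * H = 0 :=
      hdiageq _ _ (hDdiag uh) Matrix.isDiag_zero (by exact huh)
    have hP0 : P uh = 0 := by
      have := hconj (P uh)
      rw [h0] at this
      simpa using this.symm
    have := hPmul uh
    rw [hP0, Matrix.zero_mulVec] at this
    exact this.symm
  have hfsurj : Function.Surjective f :=
    (LinearMap.injective_iff_surjective).mp hfinj
  -- key surjectivity on diagonals
  have key : ∀ Λ : Matrix (Fin n) (Fin n) ℝ, Λ.IsDiag →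
      ∃ uh : Fin n → ℝ, Hᵀ * P uh * H = Λ := by
    intro Λ hΛ
    obtain ⟨uh, huh⟩ := hfsurj Λ.diag
    exact ⟨uh, hdiageq _ _ (hDdiag uh) hΛ huh⟩
  have main : ∀ Λ : Matrix (Fin n) (Fin n) ℝ, Λ.IsDiag →
      P ((H * Λ * Hᵀ).mulVec e0) = H * Λ * Hᵀ := by
    intro Λ hΛ
    obtain ⟨uh, huh⟩ := key Λ hΛ
    have hPuh : P uh = H * Λ * Hᵀ := by rw [← huh, hconj]
    have : (H * Λ * Hᵀ).mulVec e0 = uh := by rw [← hPuh, hPmul]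
    rw [this, hPuh]
  refine ⟨main, ?_, ?_, ?_⟩
  · intro uh _
    exact hDdiag uh
  · intro x _ y _ hxy
    have : P x = P y := by
      have := congrArg (fun A => H * A * Hᵀ) hxy
      simpa only [hconj] using this
    rw [← hPmul x, ← hPmul y, this]
  · intro Λ hΛ
    refine ⟨(H * Λ * Hᵀ).mulVec e0, Set.mem_univ _, ?_⟩
    simp only [main Λ hΛ]
    calc Hᵀ * (H * Λ * Hᵀ) * H = (Hᵀ * H) * Λ * (Hᵀ * H) := by simp only [mul_assoc]
    _ = Λ := by rw [hH, one_mul, mul_one]
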